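/- Let s : ℕ≥1 → ℕ be Stern's diatomic sequence: s(1) = 1, s(2n) = s(n), s(2n+1) = s(n) + s(n+1). Define S'(N) = s(1) + ⋯ + s(N−1) + s(N)/2 (as a rational number). Then S'(2N) = 3·S'(N) for all N ≥ 1. -/

import Mathlib

theorem stern_partial_sum_recurrence (s : ℕ → ℕ)
    (h1 : s 1 = 1)
    (heven : ∀ n : ℕ, 1 ≤ n → s (2 * n) = s n)
    (hodd : ∀ n : ℕ, 1 ≤ n → s (2 * n + 1) = s n + s (n + 1))
    (S' : ℕ → ℚ) (hS' : ∀ N : ℕ, S' N = (∑ k ∈ Finset.Ico 1 N, (s k : ℚ)) + (s N : ℚ) / 2)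
    (N : ℕ) (hN : 1 ≤ N) :
    S' (2 * N) = 3 * S' N := by
  induction N, hN using Nat.le_induction with
  | base =>
    have h2 : s 2 = 1 := by have := heven 1 le_rfl; simpa [h1] using this
    rw [hS' 2, hS' 1]
    simp [h1, h2]
    norm_num
  | succ n hn ih =>
    have key1 : 2 * (n + 1) = 2 * n + 1 + 1 := by ring
    have e1 : (∑ k ∈ Finset.Ico 1 (2 * (n + 1)), (s k : ℚ))
        = (∑ k ∈ Finset.Ico 1 (2 * n), (s k : ℚ)) + s (2 * n) + s (2 * n + 1) := by
      rw [key1, Finset.sum_Ico_succ_top (by omega), Finset.sum_Ico_succ_top (by omega)]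
    have e2 : (∑ k ∈ Finset.Ico 1 (n + 1), (s k : ℚ))
        = (∑ k ∈ Finset.Ico 1 n, (s k : ℚ)) + s n := by
      rw [Finset.sum_Ico_succ_top (by omega)]
    have he := heven n hn
    have he2 := heven (n + 1) (by omega)
    have ho := hodd n hn
    rw [hS' (2 * (n + 1)), hS' (n + 1), e1, e2, he, he2, ho]
    rw [hS' (2 * n), hS' n, he] at ih
    push_cast
    linarith
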